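/- Let a, b, c, d ∈ ℂ with ad − bc ≠ 0, and let φ(z) = (az + b)/(cz + d) be the associated Möbius transformation. Let U ⊆ ℂ be an open set with cz + d ≠ 0 for all z ∈ U, and let v be a smooth positive real-valued function defined on an open set containing φ(U). Define ṽ : U → ℝ by ṽ(z) = v(φ(z))·|φ′(z)|⁻². Then for every z ∈ U, ṽ(z)·(∂³ṽ/∂z³)(z)·(∂³ṽ/∂z̄³)(z) = (v·(∂³v/∂z³)·(∂³v/∂z̄³))(φ(z)); that is, the quantity Q = v·(∂³v/∂z³)·(∂³v/∂z̄³) is invariant under Möbius transformations. -/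

import Mathlib

/- We identify `ℝ²` with `ℂ` via `(x₁,x₂) ↦ z = x₁ + i x₂`. -/

/-- Partial derivative of a complex-valued function in the first Euclidean
coordinate. -/
noncomputable def pdx (f : ℂ → ℂ) (z : ℂ) : ℂ :=
  deriv (fun s : ℝ => f (z + (s : ℂ))) 0

/-- Partial derivative of a complex-valued function in the second Euclidean
coordinate. -/
noncomputable def pdy (f : ℂ → ℂ) (z : ℂ) : ℂ :=
  deriv (fun s : ℝ => f (z + (s : ℂ) * Complex.I)) 0

/-- The Wirtinger derivative `∂f/∂z = (1/2)(∂f/∂x₁ − i ∂f/∂x₂)`. -/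
noncomputable def wz (f : ℂ → ℂ) : ℂ → ℂ :=
  fun z => (pdx f z - Complex.I * pdy f z) / 2

/-- The Wirtinger derivative `∂f/∂z̄ = (1/2)(∂f/∂x₁ + i ∂f/∂x₂)`. -/
noncomputable def wzb (f : ℂ → ℂ) : ℂ → ℂ :=
  fun z => (pdx f z + Complex.I * pdy f z) / 2

/-- The quantity `Q = v · (∂³v/∂z³) · (∂³v/∂z̄³)` associated to a conformal
factor `v : ℝ² → ℝ`. -/
noncomputable def Qstatic (v : ℂ → ℝ) : ℂ → ℂ :=
  fun z => (v z : ℂ)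
    * wz (wz (wz (fun w => (v w : ℂ)))) z
    * wzb (wzb (wzb (fun w => (v w : ℂ)))) z


open Complex

lemma hasDerivAt_line (f : ℂ → ℂ) (L : ℂ →L[ℝ] ℂ) (z w : ℂ) (h : HasFDerivAt f L z) :
    HasDerivAt (fun s : ℝ => f (z + (s : ℂ) * w)) (L w) 0 := by
  have h1 : HasDerivAt (fun s : ℝ => z + (s : ℂ) * w) w 0 := by
    have := ((hasDerivAt_id (0 : ℝ)).smul_const w).const_add z
    simpa [Complex.real_smul] using this
  have h2 : HasFDerivAt f L (z + ((0:ℝ) : ℂ) * w) := by simpa using h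
  exact h2.comp_hasDerivAt 0 h1

lemma pdx_eq (f : ℂ → ℂ) (L : ℂ →L[ℝ] ℂ) (z : ℂ) (h : HasFDerivAt f L z) :
    pdx f z = L 1 := by
  have h1 := hasDerivAt_line f L z 1 h
  simp only [mul_one] at h1
  exact h1.deriv

lemma pdy_eq (f : ℂ → ℂ) (L : ℂ →L[ℝ] ℂ) (z : ℂ) (h : HasFDerivAt f L z) :
    pdy f z = L I := (hasDerivAt_line f L z I h).deriv

lemma wz_eq (f : ℂ → ℂ) (L : ℂ →L[ℝ] ℂ) (z : ℂ) (h : HasFDerivAt f L z) :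
    wz f z = (L 1 - I * L I) / 2 := by
  rw [wz, pdx_eq f L z h, pdy_eq f L z h]

lemma wzb_eq (f : ℂ → ℂ) (L : ℂ →L[ℝ] ℂ) (z : ℂ) (h : HasFDerivAt f L z) :
    wzb f z = (L 1 + I * L I) / 2 := by
  rw [wzb, pdx_eq f L z h, pdy_eq f L z h]

lemma clm_decomp (L : ℂ →L[ℝ] ℂ) (w : ℂ) : L w = (w.re : ℂ) * L 1 + (w.im : ℂ) * L I := by
  have : w = w.re • (1 : ℂ) + w.im • I := by
    simp [Complex.real_smul, Complex.re_add_im]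
  rw [this, L.map_add, L.map_smul, L.map_smul]
  simp [Complex.real_smul]

lemma wz_comp (f φ : ℂ → ℂ) (L : ℂ →L[ℝ] ℂ) (φ' z : ℂ)
    (hf : HasFDerivAt f L (φ z)) (hφ : HasDerivAt φ φ' z) :
    wz (fun w => f (φ w)) z = φ' * wz f (φ z) := by
  have hφF : HasFDerivAt φ ((ContinuousLinearMap.smulRight (1 : ℂ →L[ℂ] ℂ) φ').restrictScalars ℝ) z :=
    (hφ.hasFDerivAt).restrictScalars ℝ
  have hc : HasFDerivAt (fun w => f (φ w))
      (L.comp ((ContinuousLinearMap.smulRight (1 : ℂ →L[ℂ] ℂ) φ').restrictScalars ℝ)) z :=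
    hf.comp z hφF
  rw [wz_eq _ _ _ hc, wz_eq f L (φ z) hf]
  simp only [ContinuousLinearMap.coe_comp', Function.comp_apply,
    ContinuousLinearMap.coe_restrictScalars', ContinuousLinearMap.smulRight_apply,
    ContinuousLinearMap.one_apply, smul_eq_mul, one_mul]
  rw [clm_decomp L φ', clm_decomp L (I * φ')]
  have h1 : ((I * φ').re : ℂ) = -(φ'.im : ℂ) := by simp
  have h2 : ((I * φ').im : ℂ) = (φ'.re : ℂ) := by simp
  rw [h1, h2]
  have h3 : φ' = (φ'.re : ℂ) + (φ'.im : ℂ) * I := (Complex.re_add_im φ').symm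
  conv_rhs => rw [h3]
  ring_nf
  try simp only [Complex.I_sq]
  try ring

lemma wzb_comp (f φ : ℂ → ℂ) (L : ℂ →L[ℝ] ℂ) (φ' z : ℂ)
    (hf : HasFDerivAt f L (φ z)) (hφ : HasDerivAt φ φ' z) :
    wzb (fun w => f (φ w)) z = (starRingEnd ℂ) φ' * wzb f (φ z) := by
  have hφF : HasFDerivAt φ ((ContinuousLinearMap.smulRight (1 : ℂ →L[ℂ] ℂ) φ').restrictScalars ℝ) z :=
    (hφ.hasFDerivAt).restrictScalars ℝ
  have hc : HasFDerivAt (fun w => f (φ w))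
      (L.comp ((ContinuousLinearMap.smulRight (1 : ℂ →L[ℂ] ℂ) φ').restrictScalars ℝ)) z :=
    hf.comp z hφF
  rw [wzb_eq _ _ _ hc, wzb_eq f L (φ z) hf]
  simp only [ContinuousLinearMap.coe_comp', Function.comp_apply,
    ContinuousLinearMap.coe_restrictScalars', ContinuousLinearMap.smulRight_apply,
    ContinuousLinearMap.one_apply, smul_eq_mul, one_mul]
  rw [clm_decomp L φ', clm_decomp L (I * φ')]
  have h1 : ((I * φ').re : ℂ) = -(φ'.im : ℂ) := by simp
  have h2 : ((I * φ').im : ℂ) = (φ'.re : ℂ) := by simp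
  rw [h1, h2]
  have h3 : (starRingEnd ℂ) φ' = (φ'.re : ℂ) - (φ'.im : ℂ) * I := by
    simp [Complex.ext_iff]
  rw [h3]
  ring_nf
  try simp only [Complex.I_sq]
  try ring

lemma wz_mul (f g : ℂ → ℂ) (z : ℂ) (hf : DifferentiableAt ℝ f z) (hg : DifferentiableAt ℝ g z) :
    wz (fun w => f w * g w) z = wz f z * g z + f z * wz g z := by
  have h := (hf.hasFDerivAt.mul' hg.hasFDerivAt)
  rw [show (fun w => f w * g w) = f * g from rfl, wz_eq _ _ _ h, wz_eq f _ z hf.hasFDerivAt, wz_eq g _ z hg.hasFDerivAt]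
  simp only [ContinuousLinearMap.add_apply, ContinuousLinearMap.smul_apply,
    ContinuousLinearMap.smulRight_apply, smul_eq_mul, op_smul_eq_mul]
  ring

lemma wz_add (f g : ℂ → ℂ) (z : ℂ) (hf : DifferentiableAt ℝ f z) (hg : DifferentiableAt ℝ g z) :
    wz (fun w => f w + g w) z = wz f z + wz g z := by
  have h := (hf.hasFDerivAt.add hg.hasFDerivAt)
  rw [show (fun w => f w + g w) = f + g from rfl, wz_eq _ _ _ h, wz_eq f _ z hf.hasFDerivAt, wz_eq g _ z hg.hasFDerivAt]
  simp only [ContinuousLinearMap.add_apply]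
  ring

lemma wz_holo (f : ℂ → ℂ) (f' z : ℂ) (h : HasDerivAt f f' z) : wz f z = f' := by
  rw [wz_eq f _ z (h.hasFDerivAt.restrictScalars ℝ)]
  simp only [ContinuousLinearMap.coe_restrictScalars', ContinuousLinearMap.smulRight_apply,
    ContinuousLinearMap.one_apply, smul_eq_mul, one_mul, ContinuousLinearMap.toSpanSingleton_apply]
  have : I * (I * f') = -f' := by
    rw [← mul_assoc, Complex.I_mul_I]; ring
  rw [this]; ring

lemma wz_conj_holo (g : ℂ → ℂ) (g' z : ℂ) (h : HasDerivAt g g' z) :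
    wz (fun w => (starRingEnd ℂ) (g w)) z = 0 := by
  have hc : HasFDerivAt (fun w => (starRingEnd ℂ) (g w))
      ((Complex.conjCLE.toContinuousLinearMap).comp
        ((ContinuousLinearMap.smulRight (1 : ℂ →L[ℂ] ℂ) g').restrictScalars ℝ)) z := by
    exact (Complex.conjCLE.toContinuousLinearMap.hasFDerivAt).comp z
      ((h.hasFDerivAt).restrictScalars ℝ)
  rw [wz_eq _ _ _ hc]
  simp only [ContinuousLinearMap.coe_comp', Function.comp_apply,
    ContinuousLinearMap.coe_restrictScalars', ContinuousLinearMap.smulRight_apply,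
    ContinuousLinearMap.one_apply, smul_eq_mul, one_mul,
    ContinuousLinearEquiv.coe_coe, Complex.conjCLE_apply, map_mul, Complex.conj_I]
  ring_nf
  rw [Complex.I_sq]
  ring

lemma wzb_conj_holo (g : ℂ → ℂ) (g' z : ℂ) (h : HasDerivAt g g' z) :
    wzb (fun w => (starRingEnd ℂ) (g w)) z = (starRingEnd ℂ) g' := by
  have hc : HasFDerivAt (fun w => (starRingEnd ℂ) (g w))
      ((Complex.conjCLE.toContinuousLinearMap).comp
        ((ContinuousLinearMap.smulRight (1 : ℂ →L[ℂ] ℂ) g').restrictScalars ℝ)) z := by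
    exact (Complex.conjCLE.toContinuousLinearMap.hasFDerivAt).comp z
      ((h.hasFDerivAt).restrictScalars ℝ)
  rw [wzb_eq _ _ _ hc]
  simp only [ContinuousLinearMap.coe_comp', Function.comp_apply,
    ContinuousLinearMap.coe_restrictScalars', ContinuousLinearMap.smulRight_apply,
    ContinuousLinearMap.one_apply, smul_eq_mul, one_mul,
    ContinuousLinearEquiv.coe_coe, Complex.conjCLE_apply, map_mul, Complex.conj_I]
  have : I * (-I * (starRingEnd ℂ) g') = (starRingEnd ℂ) g' := by
    rw [← mul_assoc]
    simp [Complex.I_mul_I]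
  rw [this]; ring

lemma wz_congr (f g : ℂ → ℂ) (z : ℂ) (h : f =ᶠ[nhds z] g) : wz f z = wz g z := by
  have hx : (fun s : ℝ => f (z + (s : ℂ))) =ᶠ[nhds (0:ℝ)] (fun s : ℝ => g (z + (s : ℂ))) := by
    have ht : Filter.Tendsto (fun s : ℝ => z + (s : ℂ)) (nhds 0) (nhds z) := by
      have : Continuous (fun s : ℝ => z + (s : ℂ)) := by continuity
      simpa using this.tendsto 0
    exact h.comp_tendsto ht
  have hy : (fun s : ℝ => f (z + (s : ℂ) * I)) =ᶠ[nhds (0:ℝ)] (fun s : ℝ => g (z + (s : ℂ) * I)) := by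
    have ht : Filter.Tendsto (fun s : ℝ => z + (s : ℂ) * I) (nhds 0) (nhds z) := by
      have : Continuous (fun s : ℝ => z + (s : ℂ) * I) := by continuity
      simpa using this.tendsto 0
    exact h.comp_tendsto ht
  simp only [wz, pdx, pdy, hx.deriv_eq, hy.deriv_eq]

lemma deriv_conj_comm (u : ℝ → ℂ) (t : ℝ) :
    deriv (fun s => (starRingEnd ℂ) (u s)) t = (starRingEnd ℂ) (deriv u t) := by
  by_cases hd : DifferentiableAt ℝ u t
  · exact (Complex.conjCLE.toContinuousLinearMap.hasFDerivAt.comp_hasDerivAt t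
      hd.hasDerivAt).deriv
  · have hd2 : ¬ DifferentiableAt ℝ (fun s => (starRingEnd ℂ) (u s)) t := by
      intro hcon
      apply hd
      have := Complex.conjCLE.toContinuousLinearMap.differentiableAt.comp t hcon
      simpa [Function.comp_def, Complex.conjCLE_apply, Complex.conj_conj] using this
    rw [deriv_zero_of_not_differentiableAt hd, deriv_zero_of_not_differentiableAt hd2, map_zero]

lemma wzb_eq_conj_wz_conj (f : ℂ → ℂ) (z : ℂ) :
    wzb f z = (starRingEnd ℂ) (wz (fun w => (starRingEnd ℂ) (f w)) z) := by
  simp only [wz, wzb, pdx, pdy, deriv_conj_comm, map_div₀, map_sub, map_mul, map_ofNat,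
    Complex.conj_I, Complex.conj_conj]
  ring

lemma wzb_as_conj (f : ℂ → ℂ) (hf : ∀ w, (starRingEnd ℂ) (f w) = f w) :
    wzb f = fun z => (starRingEnd ℂ) (wz f z) := by
  funext z
  rw [wzb_eq_conj_wz_conj]
  congr 1
  apply wz_congr
  filter_upwards with w using by rw [hf w]

lemma wzb_conj_fun (h : ℂ → ℂ) :
    wzb (fun w => (starRingEnd ℂ) (h w)) = fun z => (starRingEnd ℂ) (wz h z) := by
  funext z
  rw [wzb_eq_conj_wz_conj]
  congr 1
  apply wz_congr
  filter_upwards with w using by simp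

lemma wzb3_real (f : ℂ → ℂ) (hf : ∀ w, (starRingEnd ℂ) (f w) = f w) (z : ℂ) :
    wzb (wzb (wzb f)) z = (starRingEnd ℂ) (wz (wz (wz f)) z) := by
  rw [wzb_as_conj f hf, wzb_conj_fun (wz f), wzb_conj_fun (wz (wz f))]

lemma wz_eq_fderiv_on (f : ℂ → ℂ) (z : ℂ) (hf : DifferentiableAt ℝ f z) :
    wz f z = ((fderiv ℝ f z) 1 - I * (fderiv ℝ f z) I) / 2 :=
  wz_eq f _ z hf.hasFDerivAt

lemma wz_contDiffOn (f : ℂ → ℂ) (V : Set ℂ) (hV : IsOpen V)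
    (hf : ContDiffOn ℝ (⊤ : ℕ∞) f V) : ContDiffOn ℝ (⊤ : ℕ∞) (wz f) V := by
  have hfd : ContDiffOn ℝ (⊤ : ℕ∞) (fderiv ℝ f) V := by
    apply hf.fderiv_of_isOpen hV
    exact_mod_cast le_top
  have h1 : ContDiffOn ℝ (⊤ : ℕ∞) (fun z => ((fderiv ℝ f z) 1 - I * (fderiv ℝ f z) I) / 2) V := by
    apply ContDiffOn.div_const
    exact ((hfd.clm_apply contDiffOn_const).sub (contDiffOn_const.mul (hfd.clm_apply contDiffOn_const)))
  apply h1.congr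
  intro z hz
  exact wz_eq_fderiv_on f z ((hf.differentiableOn (by simp)).differentiableAt
    (hV.mem_nhds hz))


/-- Iterated Wirtinger `∂/∂z` derivatives of the complexification of `v`. -/
noncomputable def Gn (v : ℂ → ℝ) : ℕ → ℂ → ℂ
  | 0 => fun w => ((v w : ℝ) : ℂ)
  | (n+1) => wz (Gn v n)

lemma Gn_succ (v : ℂ → ℝ) (n : ℕ) : Gn v (n+1) = wz (Gn v n) := rfl

lemma Qstatic_eq (v : ℂ → ℝ) (z : ℂ) :
    Qstatic v z = Gn v 0 z * Gn v 3 z * (starRingEnd ℂ) (Gn v 3 z) := by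
  have h0 : Qstatic v z = Gn v 0 z * Gn v 3 z * wzb (wzb (wzb (Gn v 0))) z := rfl
  rw [h0, wzb3_real (Gn v 0) (fun w => Complex.conj_ofReal _) z]
  rfl

lemma diffAt_comp' (f φ : ℂ → ℂ) (z : ℂ) (hf : DifferentiableAt ℝ f (φ z))
    (hφ : DifferentiableAt ℝ φ z) : DifferentiableAt ℝ (fun w => f (φ w)) z := by
  simpa [Function.comp_def] using hf.comp z hφ

lemma diffAt_conj (h : ℂ → ℂ) (z : ℂ) (hh : DifferentiableAt ℝ h z) :
    DifferentiableAt ℝ (fun w => (starRingEnd ℂ) (h w)) z := by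
  have := (Complex.conjCLE.toContinuousLinearMap.differentiableAt (x := h z)).comp z hh
  simpa [Function.comp_def, Complex.conjCLE_apply] using this

lemma wz_mul_conj (g h : ℂ → ℂ) (z h' : ℂ) (hg : DifferentiableAt ℝ g z)
    (hh : HasDerivAt h h' z) :
    wz (fun w => g w * (starRingEnd ℂ) (h w)) z = wz g z * (starRingEnd ℂ) (h z) := by
  have hc : DifferentiableAt ℝ (fun w => (starRingEnd ℂ) (h w)) z :=
    diffAt_conj h z (hh.differentiableAt.restrictScalars ℝ)
  rw [wz_mul g _ z hg hc, wz_conj_holo h h' z hh, mul_zero, add_zero]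

lemma wz_comp' (f φf : ℂ → ℂ) (z φ' : ℂ) (hf : DifferentiableAt ℝ f (φf z))
    (hφ : HasDerivAt φf φ' z) :
    wz (fun w => f (φf w)) z = φ' * wz f (φf z) :=
  wz_comp f φf _ φ' z hf.hasFDerivAt hφ

lemma wz_comp_mul (Gf φf rf : ℂ → ℂ) (z φ' r' : ℂ)
    (hG : DifferentiableAt ℝ Gf (φf z)) (hφ : HasDerivAt φf φ' z)
    (hr : HasDerivAt rf r' z) :
    wz (fun w => Gf (φf w) * rf w) z = φ' * wz Gf (φf z) * rf z + Gf (φf z) * r' := by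
  have h1 : DifferentiableAt ℝ (fun w => Gf (φf w)) z :=
    diffAt_comp' _ _ z hG (hφ.differentiableAt.restrictScalars ℝ)
  have h2 : DifferentiableAt ℝ rf z := hr.differentiableAt.restrictScalars ℝ
  rw [wz_mul _ _ z h1 h2, wz_comp' Gf φf z φ' hG hφ, wz_holo rf r' z hr]
  try ring

lemma Gn_contDiffOn (v : ℂ → ℝ) (V : Set ℂ) (hV : IsOpen V)
    (hv : ContDiffOn ℝ (⊤ : ℕ∞) v V) (n : ℕ) : ContDiffOn ℝ (⊤ : ℕ∞) (Gn v n) V := by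
  induction n with
  | zero =>
    have := Complex.ofRealCLM.contDiff.comp_contDiffOn (n := ((⊤ : ℕ∞) : WithTop ℕ∞)) hv
    exact this.congr (fun w hw => rfl)
  | succ n ih => exact wz_contDiffOn _ V hV ih

lemma Gn_diffAt (v : ℂ → ℝ) (V : Set ℂ) (hV : IsOpen V)
    (hv : ContDiffOn ℝ (⊤ : ℕ∞) v V) (n : ℕ) (w : ℂ) (hw : w ∈ V) :
    DifferentiableAt ℝ (Gn v n) w :=
  ((Gn_contDiffOn v V hV hv n).differentiableOn (by simp)).differentiableAt
    (hV.mem_nhds hw)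

lemma Gn_zero (v : ℂ → ℝ) (w : ℂ) : Gn v 0 w = ((v w : ℝ) : ℂ) := rfl

set_option maxHeartbeats 2000000

/-- Möbius invariance of `Q = v·(∂³v/∂z³)·(∂³v/∂z̄³)`:
for a Möbius transformation `φ(z) = (az+b)/(cz+d)` with `ad − bc ≠ 0`, an open
set `U` on which `cz + d ≠ 0`, and a smooth positive conformal factor `v` on an
open set `V` containing `φ(U)`, the pulled-back conformal factor
`ṽ(z) = v(φ(z))·|φ′(z)|⁻²` satisfies `Q_{ṽ}(z) = Q_v(φ(z))` for all `z ∈ U`. -/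
theorem Q_moebius_invariant (a b c d : ℂ) (h_det : a * d - b * c ≠ 0)
    (U : Set ℂ) (hU : IsOpen U) (h_den : ∀ z ∈ U, c * z + d ≠ 0)
    (φ : ℂ → ℂ) (hφ : φ = fun z => (a * z + b) / (c * z + d))
    (V : Set ℂ) (hV : IsOpen V) (hUV : φ '' U ⊆ V)
    (v : ℂ → ℝ) (hv_smooth : ContDiffOn ℝ (⊤ : ℕ∞) v V)
    (hv_pos : ∀ w ∈ V, 0 < v w)
    (vt : ℂ → ℝ)
    (hvt : ∀ z ∈ U, vt z = v (φ z) * (‖deriv φ z‖ ^ 2)⁻¹) :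
    ∀ z ∈ U, Qstatic vt z = Qstatic v (φ z) := by
  have hφV : ∀ z ∈ U, φ z ∈ V := fun z hz => hUV ⟨z, hz, rfl⟩
  have hD : ∀ w : ℂ, HasDerivAt (fun x => c * x + d) c w := fun w => by
    simpa using ((hasDerivAt_id w).const_mul c).add_const d
  have hφder : ∀ w : ℂ, c * w + d ≠ 0 →
      HasDerivAt φ ((a * d - b * c) / (c * w + d) ^ 2) w := by
    intro w hw
    rw [hφ]
    have h1 : HasDerivAt (fun x => a * x + b) a w := by
      simpa using ((hasDerivAt_id w).const_mul a).add_const b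
    have h2 := h1.div (hD w) hw
    refine h2.congr_deriv ?_
    congr 1
    ring
  have hP : ∀ w : ℂ, HasDerivAt (fun x => (c * x + d) ^ 2 / (a * d - b * c))
      (2 * c * (c * w + d) / (a * d - b * c)) w := by
    intro w
    have h2 := ((hD w).pow 2).div_const (a * d - b * c)
    refine h2.congr_deriv ?_
    push_cast
    ring
  have hr1 : ∀ w : ℂ, HasDerivAt (fun x => 2 * c * (c * x + d) / (a * d - b * c))
      (2 * c * c / (a * d - b * c)) w := by
    intro w
    have h2 := (((hD w).const_mul (2 * c)).div_const (a * d - b * c))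
    convert h2 using 1
  have hs2 : ∀ w : ℂ, c * w + d ≠ 0 →
      HasDerivAt (fun x => (a * d - b * c) / (c * x + d) ^ 2)
        (-(2 * c * (a * d - b * c) / (c * w + d) ^ 3)) w := by
    intro w hw
    have h2 := (hasDerivAt_const w (a * d - b * c)).div ((hD w).pow 2) (pow_ne_zero 2 hw)
    refine h2.congr_deriv ?_
    simp only [Pi.pow_apply]
    field_simp
    ring
  have hs1 : ∀ w : ℂ, c * w + d ≠ 0 →
      HasDerivAt (fun x => 2 * c / (c * x + d)) (-(2 * c * c / (c * w + d) ^ 2)) w := by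
    intro w hw
    have h2 := (hasDerivAt_const w (2 * c)).div (hD w) hw
    refine h2.congr_deriv ?_
    field_simp
    ring
  have dGn : ∀ n : ℕ, ∀ z ∈ U, DifferentiableAt ℝ (Gn v n) (φ z) :=
    fun n z hz => Gn_diffAt v V hV hv_smooth n (φ z) (hφV z hz)
  have dφ : ∀ z ∈ U, DifferentiableAt ℝ φ z :=
    fun z hz => ((hφder z (h_den z hz)).differentiableAt).restrictScalars ℝ
  have hG1 : wz (Gn v 0) = Gn v 1 := rfl
  have hG2 : wz (Gn v 1) = Gn v 2 := rfl
  have hG3 : wz (Gn v 2) = Gn v 3 := rfl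
  -- pointwise formula for the complexified vt
  have hvtC : ∀ w ∈ U, Gn vt 0 w
      = Gn v 0 (φ w) * ((c * w + d) ^ 2 / (a * d - b * c))
        * (starRingEnd ℂ) ((c * w + d) ^ 2 / (a * d - b * c)) := by
    intro w hw
    have hNw := h_den w hw
    have hNc : (starRingEnd ℂ) (c * w + d) ≠ 0 := by
      simp only [ne_eq, map_eq_zero]; exact hNw
    have hkc : (starRingEnd ℂ) (a * d - b * c) ≠ 0 := by
      simp only [ne_eq, map_eq_zero]; exact h_det
    have hX : deriv φ w = (a * d - b * c) / (c * w + d) ^ 2 := (hφder w hNw).deriv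
    simp only [Gn_zero]
    rw [hvt w hw]
    push_cast
    rw [hX]
    have habs : ((‖(a * d - b * c) / (c * w + d) ^ 2‖ : ℝ) : ℂ) ^ 2
        = ((a * d - b * c) / (c * w + d) ^ 2)
          * (starRingEnd ℂ) ((a * d - b * c) / (c * w + d) ^ 2) := by
      rw [← Complex.ofReal_pow, Complex.sq_norm]
      exact (Complex.mul_conj _).symm
    rw [habs]
    simp only [map_div₀, map_pow]
    field_simp
  -- Level 1
  have A1 : ∀ z ∈ U, wz (Gn vt 0) z
      = (Gn v 1 (φ z) + Gn v 0 (φ z) * (2 * c * (c * z + d) / (a * d - b * c)))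
        * (starRingEnd ℂ) ((c * z + d) ^ 2 / (a * d - b * c)) := by
    intro z hz
    have hN := h_den z hz
    have ev : Gn vt 0 =ᶠ[nhds z]
        (fun w => Gn v 0 (φ w) * ((c * w + d) ^ 2 / (a * d - b * c))
          * (starRingEnd ℂ) ((c * w + d) ^ 2 / (a * d - b * c))) :=
      Filter.eventuallyEq_of_mem (hU.mem_nhds hz) (fun w hw => hvtC w hw)
    rw [wz_congr _ _ z ev]
    have hg : DifferentiableAt ℝ
        (fun w => Gn v 0 (φ w) * ((c * w + d) ^ 2 / (a * d - b * c))) z :=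
      (diffAt_comp' _ _ z (dGn 0 z hz) (dφ z hz)).mul
        (((hP z).differentiableAt).restrictScalars ℝ)
    rw [wz_mul_conj (fun w => Gn v 0 (φ w) * ((c * w + d) ^ 2 / (a * d - b * c)))
      (fun w => (c * w + d) ^ 2 / (a * d - b * c)) z _ hg (hP z)]
    rw [wz_comp_mul (Gn v 0) φ (fun w => (c * w + d) ^ 2 / (a * d - b * c)) z
      ((a * d - b * c) / (c * z + d) ^ 2) (2 * c * (c * z + d) / (a * d - b * c))
      (dGn 0 z hz) (hφder z hN) (hP z)]
    rw [hG1]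
    congr 1
    field_simp
    try ring
  -- Level 2
  have A2 : ∀ z ∈ U, wz (wz (Gn vt 0)) z
      = (Gn v 2 (φ z) * ((a * d - b * c) / (c * z + d) ^ 2)
          + Gn v 1 (φ z) * (2 * c / (c * z + d))
          + Gn v 0 (φ z) * (2 * c * c / (a * d - b * c)))
        * (starRingEnd ℂ) ((c * z + d) ^ 2 / (a * d - b * c)) := by
    intro z hz
    have hN := h_den z hz
    have ev : wz (Gn vt 0) =ᶠ[nhds z]
        (fun w => (Gn v 1 (φ w) + Gn v 0 (φ w) * (2 * c * (c * w + d) / (a * d - b * c)))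
          * (starRingEnd ℂ) ((c * w + d) ^ 2 / (a * d - b * c))) :=
      Filter.eventuallyEq_of_mem (hU.mem_nhds hz) (fun w hw => A1 w hw)
    rw [wz_congr _ _ z ev]
    have hd1 : DifferentiableAt ℝ (fun w => Gn v 1 (φ w)) z :=
      diffAt_comp' _ _ z (dGn 1 z hz) (dφ z hz)
    have hd0 : DifferentiableAt ℝ
        (fun w => Gn v 0 (φ w) * (2 * c * (c * w + d) / (a * d - b * c))) z :=
      (diffAt_comp' _ _ z (dGn 0 z hz) (dφ z hz)).mul
        (((hr1 z).differentiableAt).restrictScalars ℝ)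
    rw [wz_mul_conj
      (fun w => Gn v 1 (φ w) + Gn v 0 (φ w) * (2 * c * (c * w + d) / (a * d - b * c)))
      (fun w => (c * w + d) ^ 2 / (a * d - b * c)) z _ (hd1.add hd0) (hP z)]
    rw [wz_add (fun w => Gn v 1 (φ w))
      (fun w => Gn v 0 (φ w) * (2 * c * (c * w + d) / (a * d - b * c))) z hd1 hd0]
    rw [wz_comp' (Gn v 1) φ z ((a * d - b * c) / (c * z + d) ^ 2) (dGn 1 z hz) (hφder z hN)]
    rw [wz_comp_mul (Gn v 0) φ (fun w => 2 * c * (c * w + d) / (a * d - b * c)) z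
      ((a * d - b * c) / (c * z + d) ^ 2) (2 * c * c / (a * d - b * c))
      (dGn 0 z hz) (hφder z hN) (hr1 z)]
    rw [hG1, hG2]
    congr 1
    field_simp [hN, h_det]
    try ring
  -- Level 3
  have A3 : ∀ z ∈ U, wz (wz (wz (Gn vt 0))) z
      = Gn v 3 (φ z) * ((a * d - b * c) ^ 2 / (c * z + d) ^ 4)
        * (starRingEnd ℂ) ((c * z + d) ^ 2 / (a * d - b * c)) := by
    intro z hz
    have hN := h_den z hz
    have ev : wz (wz (Gn vt 0)) =ᶠ[nhds z]
        (fun w => (Gn v 2 (φ w) * ((a * d - b * c) / (c * w + d) ^ 2)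
            + Gn v 1 (φ w) * (2 * c / (c * w + d))
            + Gn v 0 (φ w) * (2 * c * c / (a * d - b * c)))
          * (starRingEnd ℂ) ((c * w + d) ^ 2 / (a * d - b * c))) :=
      Filter.eventuallyEq_of_mem (hU.mem_nhds hz) (fun w hw => A2 w hw)
    rw [wz_congr _ _ z ev]
    have hd2 : DifferentiableAt ℝ
        (fun w => Gn v 2 (φ w) * ((a * d - b * c) / (c * w + d) ^ 2)) z :=
      (diffAt_comp' _ _ z (dGn 2 z hz) (dφ z hz)).mul
        (((hs2 z hN).differentiableAt).restrictScalars ℝ)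
    have hd1 : DifferentiableAt ℝ (fun w => Gn v 1 (φ w) * (2 * c / (c * w + d))) z :=
      (diffAt_comp' _ _ z (dGn 1 z hz) (dφ z hz)).mul
        (((hs1 z hN).differentiableAt).restrictScalars ℝ)
    have hd0 : DifferentiableAt ℝ
        (fun w => Gn v 0 (φ w) * (2 * c * c / (a * d - b * c))) z :=
      (diffAt_comp' _ _ z (dGn 0 z hz) (dφ z hz)).mul (differentiableAt_const _)
    rw [wz_mul_conj
      (fun w => Gn v 2 (φ w) * ((a * d - b * c) / (c * w + d) ^ 2)
        + Gn v 1 (φ w) * (2 * c / (c * w + d))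
        + Gn v 0 (φ w) * (2 * c * c / (a * d - b * c)))
      (fun w => (c * w + d) ^ 2 / (a * d - b * c)) z _ ((hd2.add hd1).add hd0) (hP z)]
    rw [wz_add (fun w => Gn v 2 (φ w) * ((a * d - b * c) / (c * w + d) ^ 2)
        + Gn v 1 (φ w) * (2 * c / (c * w + d)))
      (fun w => Gn v 0 (φ w) * (2 * c * c / (a * d - b * c))) z (hd2.add hd1) hd0]
    rw [wz_add (fun w => Gn v 2 (φ w) * ((a * d - b * c) / (c * w + d) ^ 2))
      (fun w => Gn v 1 (φ w) * (2 * c / (c * w + d))) z hd2 hd1]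
    rw [wz_comp_mul (Gn v 2) φ (fun w => (a * d - b * c) / (c * w + d) ^ 2) z
      ((a * d - b * c) / (c * z + d) ^ 2) (-(2 * c * (a * d - b * c) / (c * z + d) ^ 3))
      (dGn 2 z hz) (hφder z hN) (hs2 z hN)]
    rw [wz_comp_mul (Gn v 1) φ (fun w => 2 * c / (c * w + d)) z
      ((a * d - b * c) / (c * z + d) ^ 2) (-(2 * c * c / (c * z + d) ^ 2))
      (dGn 1 z hz) (hφder z hN) (hs1 z hN)]
    rw [wz_comp_mul (Gn v 0) φ (fun _ => 2 * c * c / (a * d - b * c)) z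
      ((a * d - b * c) / (c * z + d) ^ 2) 0
      (dGn 0 z hz) (hφder z hN) (hasDerivAt_const z _)]
    rw [hG1, hG2, hG3]
    congr 1
    revert hN h_det
    generalize c * z + d = N
    generalize a * d - b * c = K
    intro hdet hN
    ring_nf
    try simp only [inv_pow]
    field_simp
    try ring
  -- Final assembly
  intro z hz
  have hN := h_den z hz
  have hNc : (starRingEnd ℂ) (c * z + d) ≠ 0 := by
    simp only [ne_eq, map_eq_zero]; exact hN
  have hkc : (starRingEnd ℂ) (a * d - b * c) ≠ 0 := by
    simp only [ne_eq, map_eq_zero]; exact h_det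
  rw [Qstatic_eq vt z, Qstatic_eq v (φ z)]
  have h3 : Gn vt 3 z = Gn v 3 (φ z) * ((a * d - b * c) ^ 2 / (c * z + d) ^ 4)
      * (starRingEnd ℂ) ((c * z + d) ^ 2 / (a * d - b * c)) := by
    have hrw : Gn vt 3 = wz (wz (wz (Gn vt 0))) := rfl
    rw [hrw]
    exact A3 z hz
  rw [hvtC z hz, h3]
  clear hNc hkc
  revert hN h_det
  generalize c * z + d = N
  generalize a * d - b * c = K
  generalize Gn v 0 (φ z) = X
  generalize Gn v 3 (φ z) = Y
  intro hdet hN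
  simp only [map_mul, map_div₀, map_pow, Complex.conj_conj]
  have hN' : (starRingEnd ℂ) N ≠ 0 := by simp only [ne_eq, map_eq_zero]; exact hN
  have hK' : (starRingEnd ℂ) K ≠ 0 := by simp only [ne_eq, map_eq_zero]; exact hdet
  ring_nf
  try simp only [inv_pow]
  field_simp
  try ring
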